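/- Let D be a connected digraph and E' a cycle-free subset of edges of D of size k. If T is an oriented spanning tree of the contraction D/E' rooted at the image of a vertex r, then the subgraph of D with edge set E(T) ∪ E' is an i-spanning tree of D rooted at r for some 0 ≤ i ≤ k. -/

import Mathlib

open Classical

/-- A finite multidigraph: finite vertex and edge types with initial and final
vertex maps. -/
structure Multidigraph where
  V : Type
  E : Type
  [fintV : Fintype V]
  [fintE : Fintype E]
  first : E → V
  last : E → V

attribute [instance] Multidigraph.fintV Multidigraph.fintE

namespace Multidigraph

variable (D : Multidigraph)

/-- The out-degree of a vertex. -/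
noncomputable def outdeg (v : D.V) : ℕ := Nat.card {e : D.E // D.first e = v}

/-- The in-degree of a vertex. -/
noncomputable def indeg (v : D.V) : ℕ := Nat.card {e : D.E // D.last e = v}

/-- Undirected adjacency using only edges in `T`. -/
def Adj (T : Set D.E) (a b : D.V) : Prop :=
  ∃ e ∈ T, (D.first e = a ∧ D.last e = b) ∨ (D.first e = b ∧ D.last e = a)

/-- Undirected reachability using only edges in `T`. -/
def Reach (T : Set D.E) : D.V → D.V → Prop := Relation.ReflTransGen (D.Adj T)

/-- The underlying undirected graph is connected. -/
def Connected : Prop := ∀ a b : D.V, D.Reach Set.univ a b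

/-- An Eulerian digraph: connected and with in-degree equal to out-degree at
every vertex. -/
def Eulerian : Prop := D.Connected ∧ ∀ v : D.V, D.indeg v = D.outdeg v

/-- `T` is a spanning tree of the underlying undirected graph: it connects all
vertices and has `|V| - 1` edges. -/
def IsSpanningTree (T : Set D.E) : Prop :=
  (∀ a b : D.V, D.Reach T a b) ∧ Nat.card T = Nat.card D.V - 1

/-- The out-degree of `v` in the subgraph `T` after reversing the orientations
of the edges in `S`. -/
noncomputable def outdegRev (T S : Set D.E) (v : D.V) : ℕ :=
  Nat.card {e : D.E // (e ∈ T \ S ∧ D.first e = v) ∨ (e ∈ S ∧ D.last e = v)}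

/-- `T` becomes an oriented spanning tree rooted at `r` (every vertex has a
unique directed path to `r`, i.e. every non-root vertex has out-degree `1` and
the root has out-degree `0` in the tree) after reversing exactly the edges of
`S ⊆ T`. -/
def IsOrientedSpanningTreeRev (T S : Set D.E) (r : D.V) : Prop :=
  D.IsSpanningTree T ∧ S ⊆ T ∧ (∀ v : D.V, v ≠ r → D.outdegRev T S v = 1) ∧
    D.outdegRev T S r = 0

/-- `T` is an oriented spanning tree rooted at `r`: every vertex has a unique
directed path to `r`. -/
def IsOrientedSpanningTree (T : Set D.E) (r : D.V) : Prop :=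
  D.IsOrientedSpanningTreeRev T ∅ r

/-- `T` is a `k`-spanning tree rooted at `r`: reversing the orientation of
exactly `k` of its edges yields an oriented spanning tree rooted at `r`. -/
def IsKSpanningTree (T : Set D.E) (r : D.V) (k : ℕ) : Prop :=
  ∃ S : Set D.E, Nat.card S = k ∧ D.IsOrientedSpanningTreeRev T S r

/-- `c D k r` is the number of `k`-spanning trees of `D` rooted at `r`. -/
noncomputable def c (k : ℕ) (r : D.V) : ℕ :=
  Nat.card {T : Set D.E // D.IsKSpanningTree T r k}

/-- The transpose digraph: every edge reversed. -/
def transpose : Multidigraph := { D with first := D.last, last := D.first }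

end Multidigraph


namespace Multidigraph

variable (D : Multidigraph)

/-- A set of edges is cycle-free if no edge connects two vertices that are
already connected by the remaining edges of the set (no undirected cycles). -/
def CycleFree (E' : Set D.E) : Prop :=
  ∀ e ∈ E', ¬ D.Reach (E' \ {e}) (D.first e) (D.last e)

/-- The relation on vertices induced by the contracted edges. -/
def contractRel (E' : Set D.E) (a b : D.V) : Prop :=
  ∃ e ∈ E', D.first e = a ∧ D.last e = b

/-- The contraction `D/E'`: vertices are identified along the edges of `E'`,
and the edges of `E'` are removed. -/
noncomputable def contract (E' : Set D.E) : Multidigraph where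
  V := Quotient (Relation.EqvGen.setoid (D.contractRel E'))
  E := {e : D.E // e ∉ E'}
  fintV := Fintype.ofFinite _
  fintE := Fintype.ofFinite _
  first e := Quotient.mk _ (D.first e.1)
  last e := Quotient.mk _ (D.last e.1)

end Multidigraph

namespace Multidigraph

variable {D : Multidigraph}

lemma adj_symm {A : Set D.E} {a b : D.V} (h : D.Adj A a b) : D.Adj A b a := by
  obtain ⟨e, he, h1 | h1⟩ := h
  · exact ⟨e, he, Or.inr h1⟩
  · exact ⟨e, he, Or.inl h1⟩

lemma reach_symm {A : Set D.E} {a b : D.V} (h : D.Reach A a b) : D.Reach A b a :=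
  Relation.ReflTransGen.mono (fun _ _ hxy => adj_symm hxy) _ _ (Relation.reflTransGen_swap.mpr h)

lemma reach_mono {A B : Set D.E} (h : A ⊆ B) {a b : D.V} (hr : D.Reach A a b) :
    D.Reach B a b :=
  Relation.ReflTransGen.mono (fun _ _ ⟨e, he, h2⟩ => ⟨e, h he, h2⟩) _ _ hr

lemma reach_of_endpoints {H : Set D.E} {f : D.E} (hf : f ∈ H) {v w : D.V}
    (hv : D.first f = v ∨ D.last f = v) (hw : D.first f = w ∨ D.last f = w) :
    D.Reach H w v := by
  rcases hv with hv | hv <;> rcases hw with hw | hw <;> subst hv <;> subst hw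
  · exact Relation.ReflTransGen.refl
  · exact Relation.ReflTransGen.single ⟨f, hf, Or.inr ⟨rfl, rfl⟩⟩
  · exact Relation.ReflTransGen.single ⟨f, hf, Or.inl ⟨rfl, rfl⟩⟩
  · exact Relation.ReflTransGen.refl

lemma reach_split {F : Set D.E} (e : D.E) {a b : D.V} (h : D.Reach F a b) :
    D.Reach (F \ {e}) a b ∨ D.Reach (F \ {e}) a (D.first e) ∨
      D.Reach (F \ {e}) a (D.last e) := by
  induction h with
  | refl => exact Or.inl Relation.ReflTransGen.refl
  | @tail c b hac hadj ih =>
    obtain ⟨f, hf, hor⟩ := hadj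
    by_cases hfe : f = e
    · subst hfe
      rcases ih with ih | ih | ih
      · rcases hor with ⟨h1, h2⟩ | ⟨h1, h2⟩
        · exact Or.inr (Or.inl (h1 ▸ ih))
        · exact Or.inr (Or.inr (h2 ▸ ih))
      · exact Or.inr (Or.inl ih)
      · exact Or.inr (Or.inr ih)
    · rcases ih with ih | ih | ih
      · exact Or.inl (ih.tail ⟨f, ⟨hf, hfe⟩, hor⟩)
      · exact Or.inr (Or.inl ih)
      · exact Or.inr (Or.inr ih)

lemma cycleFree_mono {A B : Set D.E} (h : A ⊆ B) (hB : D.CycleFree B) :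
    D.CycleFree A := fun e he hr =>
  hB e (h he) (reach_mono (Set.diff_subset_diff_left h) hr)

/-- Exactly one endpoint of an edge in a cycle-free set can reach `ρ`
without using that edge, provided some endpoint reaches `ρ` at all. -/
lemma endpoint_xor {F : Set D.E} (hcf : D.CycleFree F) {e : D.E} (he : e ∈ F) {ρ : D.V}
    (hr : D.Reach F (D.first e) ρ) :
    (D.Reach (F \ {e}) (D.first e) ρ ∧ ¬ D.Reach (F \ {e}) (D.last e) ρ) ∨
    (¬ D.Reach (F \ {e}) (D.first e) ρ ∧ D.Reach (F \ {e}) (D.last e) ρ) := by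
  have hnot : ¬ (D.Reach (F \ {e}) (D.first e) ρ ∧ D.Reach (F \ {e}) (D.last e) ρ) := by
    rintro ⟨h1, h2⟩
    exact hcf e he (h1.trans (reach_symm h2))
  have hsome : D.Reach (F \ {e}) (D.first e) ρ ∨ D.Reach (F \ {e}) (D.last e) ρ := by
    rcases reach_split e (reach_symm hr) with h | h | h
    · exact Or.inl (reach_symm h)
    · exact Or.inl (reach_symm h)
    · exact Or.inr (reach_symm h)
  tauto

/-- Uniqueness of the separating edge at a vertex. -/
lemma sep_unique {F : Set D.E} (hcf : D.CycleFree F) {ρ v : D.V} {f₁ f₂ : D.E}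
    (h1 : f₁ ∈ F) (h2 : f₂ ∈ F) (hne : f₁ ≠ f₂)
    (e1 : D.first f₁ = v ∨ D.last f₁ = v) (e2 : D.first f₂ = v ∨ D.last f₂ = v)
    (hreach : D.Reach F v ρ)
    (hn1 : ¬ D.Reach (F \ {f₁}) v ρ) (hn2 : ¬ D.Reach (F \ {f₂}) v ρ) : False := by
  -- first, from ρ we can reach some endpoint z of f₂ avoiding f₂
  have hz : ∃ z, (D.first f₂ = z ∨ D.last f₂ = z) ∧ D.Reach (F \ {f₂}) ρ z := by
    rcases reach_split f₂ (reach_symm hreach) with h | h | h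
    · exact absurd (reach_symm h) hn2
    · exact ⟨_, Or.inl rfl, h⟩
    · exact ⟨_, Or.inr rfl, h⟩
  obtain ⟨z, hz1, hz2⟩ := hz
  have hf2mem : f₂ ∈ F \ {f₁} := ⟨h2, fun hh => hne (Set.mem_singleton_iff.mp hh).symm⟩
  have hf1mem : f₁ ∈ F \ {f₂} := ⟨h1, fun hh => hne (Set.mem_singleton_iff.mp hh)⟩
  rcases reach_split f₁ hz2 with h | h | h
  · -- ρ reaches z avoiding both; then v reaches ρ avoiding f₁ via f₂
    have hzv : D.Reach (F \ {f₁}) z v := reach_of_endpoints hf2mem e2 hz1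
    have : D.Reach (F \ {f₁}) v ρ :=
      reach_symm ((reach_mono (by rw [Set.diff_diff_comm]; exact Set.diff_subset) h).trans hzv)
    exact hn1 this
  · have : D.Reach (F \ {f₂}) v ρ :=
      reach_symm ((reach_mono Set.diff_subset h).trans
        (reach_of_endpoints hf1mem e1 (Or.inl rfl)))
    exact hn2 this
  · have : D.Reach (F \ {f₂}) v ρ :=
      reach_symm ((reach_mono Set.diff_subset h).trans
        (reach_of_endpoints hf1mem e1 (Or.inr rfl)))
    exact hn2 this

end Multidigraph

namespace Multidigraph

variable {D : Multidigraph}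

/-- Existence of a separating edge at a vertex in a cycle-free set. -/
lemma sep_exists : ∀ (n : ℕ) (F : Set D.E), Nat.card F = n → D.CycleFree F →
    ∀ v ρ : D.V, D.Reach F v ρ → v ≠ ρ →
    ∃ f ∈ F, (D.first f = v ∨ D.last f = v) ∧ ¬ D.Reach (F \ {f}) v ρ := by
  intro n
  induction n using Nat.strong_induction_on with
  | _ n ih =>
    intro F hcard hcf v ρ hreach hne
    rcases (Relation.ReflTransGen.cases_head hreach) with h | ⟨c, hadj, hcρ⟩
    · exact absurd h hne
    obtain ⟨e₀, he₀, hor⟩ := hadj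
    by_cases hc : D.Reach (F \ {e₀}) v ρ
    · -- remove e₀ and use the induction hypothesis
      have hlt : Nat.card ↥(F \ {e₀}) < n := by
        rw [Nat.card_coe_set_eq, ← hcard, Nat.card_coe_set_eq]
        exact Set.ncard_diff_singleton_lt_of_mem he₀ (Set.toFinite F)
      obtain ⟨f, hf, hfend, hfnot⟩ :=
        ih _ hlt (F \ {e₀}) rfl (cycleFree_mono Set.diff_subset hcf) v ρ hc hne
      refine ⟨f, hf.1, hfend, ?_⟩
      intro hcon
      have hρv : ¬ D.Reach ((F \ {e₀}) \ {f}) ρ v := fun h => hfnot (reach_symm h)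
      have hw : ∃ w, (D.first f = w ∨ D.last f = w) ∧ D.Reach ((F \ {e₀}) \ {f}) ρ w := by
        rcases reach_split f (reach_symm hc) with h | h | h
        · exact absurd h hρv
        · exact ⟨_, Or.inl rfl, h⟩
        · exact ⟨_, Or.inr rfl, h⟩
      obtain ⟨w, hwend, hwre⟩ := hw
      have hρv2 : D.Reach (F \ {e₀}) ρ v :=
        (reach_mono Set.diff_subset hwre).trans (reach_of_endpoints hf hfend hwend)
      have hz : ∃ z, (D.first e₀ = z ∨ D.last e₀ = z) ∧ D.Reach ((F \ {e₀}) \ {f}) ρ z := by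
        rcases reach_split e₀ (reach_symm hcon) with h | h | h
        · rw [Set.diff_diff_comm] at h; exact absurd h hρv
        · rw [Set.diff_diff_comm] at h; exact ⟨_, Or.inl rfl, h⟩
        · rw [Set.diff_diff_comm] at h; exact ⟨_, Or.inr rfl, h⟩
      obtain ⟨z, hzend, hzre⟩ := hz
      refine hcf e₀ he₀ ?_
      rcases hor with ⟨h1, h2⟩ | ⟨h1, h2⟩
      · rcases hzend with hz1 | hz1 <;> subst hz1
        · rw [h1] at hzre; exact absurd hzre hρv
        · rw [h1]
          exact (reach_symm hρv2).trans (reach_mono Set.diff_subset hzre)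
      · rcases hzend with hz1 | hz1 <;> subst hz1
        · rw [h2]
          exact (reach_symm (reach_mono Set.diff_subset hzre)).trans hρv2
        · rw [h2] at hzre; exact absurd hzre hρv
    · -- e₀ itself is the separating edge
      refine ⟨e₀, he₀, ?_, hc⟩
      rcases hor with ⟨h1, _⟩ | ⟨_, h2⟩
      · exact Or.inl h1
      · exact Or.inr h2

/-- Equivalence generated by contraction equals undirected reachability. -/
lemma eqvGen_iff_reach {E' : Set D.E} {a b : D.V} :
    Relation.EqvGen (D.contractRel E') a b ↔ D.Reach E' a b := by
  constructor
  · intro h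
    induction h with
    | rel x y hxy =>
      obtain ⟨e, he, h1, h2⟩ := hxy
      exact Relation.ReflTransGen.single ⟨e, he, Or.inl ⟨h1, h2⟩⟩
    | refl x => exact Relation.ReflTransGen.refl
    | symm x y _ ihh => exact reach_symm ihh
    | trans x y z _ _ ih1 ih2 => exact ih1.trans ih2
  · intro h
    induction h with
    | refl => exact Relation.EqvGen.refl a
    | @tail c b hac hadj ih =>
      obtain ⟨e, he, ⟨h1, h2⟩ | ⟨h1, h2⟩⟩ := hadj
      · exact ih.trans _ _ _ (Relation.EqvGen.rel _ _ ⟨e, he, h1, h2⟩)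
      · exact ih.trans _ _ _ (Relation.EqvGen.symm _ _ (Relation.EqvGen.rel _ _ ⟨e, he, h1, h2⟩))

lemma outdegRev_empty (D : Multidigraph) (T : Set D.E) (v : D.V) :
    D.outdegRev T ∅ v = Nat.card {e : D.E // e ∈ T ∧ D.first e = v} := by
  unfold outdegRev
  exact Nat.card_congr (Equiv.subtypeEquivRight (by intro e; simp))

end Multidigraph

set_option maxHeartbeats 1000000

/-- Let `D` be a connected digraph and `E'` a cycle-free set of
`k` edges. If `T` is an oriented spanning tree of the contraction `D/E'`
rooted at the image of `r`, then the subgraph of `D` with edge set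
`E(T) ∪ E'` is an `i`-spanning tree of `D` rooted at `r` for some `0 ≤ i ≤ k`. -/
theorem stmt16 (D : Multidigraph) (hconn : D.Connected) (E' : Set D.E) (k : ℕ)
    (hcf : D.CycleFree E') (hcard : Nat.card E' = k) (r : D.V)
    (T : Set (D.contract E').E)
    (hT : (D.contract E').IsOrientedSpanningTree T
      (Quotient.mk (Relation.EqvGen.setoid (D.contractRel E')) r)) :
    ∃ i ≤ k, D.IsKSpanningTree ((Subtype.val '' T) ∪ E') r i := by
  classical
  obtain ⟨⟨hTspan, hTcard⟩, -, hTdeg, hTroot⟩ := hT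
  let CE : Multidigraph := D.contract E'
  let mk : D.V → CE.V := fun a => Quotient.mk (Relation.EqvGen.setoid (D.contractRel E')) a
  set T' : Set D.E := Subtype.val '' T with hT'
  -- basic equivalence facts
  have heqv : ∀ a b : D.V, mk a = mk b ↔ D.Reach E' a b := by
    intro a b
    rw [show (mk a = mk b) ↔ Relation.EqvGen (D.contractRel E') a b from Quotient.eq]
    exact Multidigraph.eqvGen_iff_reach
  have hclass : ∀ e ∈ E', mk (D.first e) = mk (D.last e) := fun e he =>
    (heqv _ _).mpr (Relation.ReflTransGen.single ⟨e, he, Or.inl ⟨rfl, rfl⟩⟩)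
  have hT'notE : ∀ e ∈ T', e ∉ E' := by
    rintro e ⟨ee, heeT, rfl⟩; exact ee.2
  -- the unique tree edge out of each non-root class
  have hcfirst : ∀ ee : CE.E, CE.first ee = mk (D.first ee.1) := fun ee => rfl
  set Tset : CE.V → Set CE.E := fun q => {ee | ee ∈ T ∧ CE.first ee = q} with hTset
  have hTsetcard : ∀ q, CE.outdegRev T ∅ q = (Tset q).ncard := by
    intro q
    rw [Multidigraph.outdegRev_empty, ← Nat.card_coe_set_eq]
    rfl
  have hTrootempty : Tset (mk r) = ∅ := by
    have h0 : CE.outdegRev T ∅ (mk r) = 0 := hTroot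
    rw [hTsetcard] at h0
    exact (Set.ncard_eq_zero (Set.toFinite _)).mp h0
  have hTone : ∀ q, q ≠ mk r → ∃ ee, Tset q = {ee} := by
    intro q hq
    have h1 := hTdeg q hq
    rw [hTsetcard] at h1
    exact Set.ncard_eq_one.mp h1
  -- the root of each class
  have hrootspec : ∀ q : CE.V, ∃ x : D.V, (mk x = q) ∧ (q = mk r → x = r) ∧
      (q ≠ mk r → ∃ ee : CE.E, Tset q = {ee} ∧ D.first ee.1 = x) := by
    intro q
    by_cases hq : q = mk r
    · exact ⟨r, by rw [hq], fun _ => rfl, fun h => absurd hq h⟩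
    · obtain ⟨ee, hee⟩ := hTone q hq
      have hmem : ee ∈ Tset q := by rw [hee]; rfl
      exact ⟨D.first ee.1, hmem.2, fun h => absurd h hq, fun _ => ⟨ee, hee, rfl⟩⟩
  set root : CE.V → D.V := fun q => (hrootspec q).choose with hrootdef
  have hrootmk : ∀ q, mk (root q) = q := fun q => (hrootspec q).choose_spec.1
  have hrootr : root (mk r) = r := (hrootspec _).choose_spec.2.1 rfl
  have hrootT : ∀ q, q ≠ mk r → ∃ ee : CE.E, Tset q = {ee} ∧ D.first ee.1 = root q :=
    fun q hq => (hrootspec q).choose_spec.2.2 hq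
  set ρf : D.V → D.V := fun v => root (mk v) with hρf
  have hρreach : ∀ v, D.Reach E' v (ρf v) := fun v => (heqv _ _).mp (hrootmk (mk v)).symm
  have hρcong : ∀ {a b : D.V}, mk a = mk b → ρf a = ρf b := fun h => by
    simp only [hρf]; rw [h]
  -- the set of reversed edges
  set S : Set D.E := {e | e ∈ E' ∧ D.Reach (E' \ {e}) (D.first e) (ρf (D.first e))} with hS
  have hSsub : S ⊆ E' := fun e he => he.1
  have hSsubU : S ⊆ T' ∪ E' := fun e he => Or.inr he.1
  -- out-sets
  set OutSet : D.V → Set D.E :=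
    fun v => {e | (e ∈ (T' ∪ E') \ S ∧ D.first e = v) ∨ (e ∈ S ∧ D.last e = v)} with hOutSet
  have houtdeg : ∀ v, D.outdegRev (T' ∪ E') S v = (OutSet v).ncard := by
    intro v
    unfold Multidigraph.outdegRev
    rw [← Nat.card_coe_set_eq]
    rfl
  set TOset : D.V → Set D.E := fun v => {e | e ∈ T' ∧ D.first e = v} with hTOset
  set EOset : D.V → Set D.E :=
    fun v => {e | e ∈ E' ∧ (D.first e = v ∨ D.last e = v) ∧
      ¬ D.Reach (E' \ {e}) v (ρf v)} with hEOset
  -- the splitting of the out-set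
  have hsplit : ∀ v, OutSet v = TOset v ∪ EOset v := by
    intro v
    ext e
    constructor
    · rintro (⟨⟨heU, heS⟩, hfe⟩ | ⟨heS, hle⟩)
      · rcases heU with heT' | heE'
        · exact Or.inl ⟨heT', hfe⟩
        · refine Or.inr ⟨heE', Or.inl hfe, ?_⟩
          intro hre
          exact heS ⟨heE', by rw [hfe]; exact hre⟩
      · obtain ⟨heE', hre⟩ := heS
        refine Or.inr ⟨heE', Or.inr hle, ?_⟩
        have hxor := Multidigraph.endpoint_xor hcf heE' (hρreach (D.first e))
        have hρeq : ρf (D.first e) = ρf v := hρcong (by rw [hclass e heE', hle])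
        rcases hxor with ⟨h1, h2⟩ | ⟨h1, h2⟩
        · rw [hle, hρeq] at h2; exact h2
        · exact absurd hre h1
    · rintro (⟨heT', hfe⟩ | ⟨heE', hend, hnre⟩)
      · exact Or.inl ⟨⟨Or.inl heT', fun hs => hT'notE e heT' (hSsub hs)⟩, hfe⟩
      · rcases hend with hfe | hle
        · refine Or.inl ⟨⟨Or.inr heE', ?_⟩, hfe⟩
          rintro ⟨-, hre⟩
          rw [hfe] at hre
          exact hnre hre
        · refine Or.inr ⟨⟨heE', ?_⟩, hle⟩
          have hxor := Multidigraph.endpoint_xor hcf heE' (hρreach (D.first e))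
          have hρeq : ρf (D.first e) = ρf v := hρcong (by rw [hclass e heE', hle])
          rcases hxor with ⟨h1, h2⟩ | ⟨h1, h2⟩
          · exact h1
          · rw [hle, hρeq] at h2; exact absurd h2 hnre
  have hdisj : ∀ v, Disjoint (TOset v) (EOset v) := by
    intro v
    rw [Set.disjoint_left]
    rintro e ⟨heT', -⟩ heEO
    exact hT'notE e heT' heEO.1
  -- counting the tree edges out of v
  have hTOmem : ∀ v e, e ∈ TOset v → ∃ ee : CE.E, ee ∈ Tset (mk v) ∧ e = ee.1 := by
    rintro v e ⟨⟨ee, heeT, rfl⟩, hfe⟩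
    exact ⟨ee, ⟨heeT, congrArg mk hfe⟩, rfl⟩
  have hTO_r : ∀ v, mk v = mk r → TOset v = ∅ := by
    intro v hv
    rw [Set.eq_empty_iff_forall_notMem]
    intro e he
    obtain ⟨ee, heemem, -⟩ := hTOmem v e he
    rw [hv, hTrootempty] at heemem
    exact heemem
  have hTO_one : ∀ v, mk v ≠ mk r → v = ρf v →
      ∃ f, TOset v = {f} := by
    intro v hv hvρ
    obtain ⟨ee, hee, heefirst⟩ := hrootT (mk v) hv
    refine ⟨ee.1, ?_⟩
    apply Set.eq_singleton_iff_unique_mem.mpr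
    constructor
    · have hmem : ee ∈ Tset (mk v) := by rw [hee]; rfl
      exact ⟨⟨ee, hmem.1, rfl⟩, by rw [heefirst]; exact hvρ.symm⟩
    · intro e he
      obtain ⟨ee', hee'mem, rfl⟩ := hTOmem v e he
      rw [hee] at hee'mem
      rw [Set.mem_singleton_iff.mp hee'mem]
  have hTO_empty : ∀ v, mk v ≠ mk r → v ≠ ρf v → TOset v = ∅ := by
    intro v hv hvρ
    rw [Set.eq_empty_iff_forall_notMem]
    intro e he
    obtain ⟨ee', hee'mem, heeq⟩ := hTOmem v e he
    obtain ⟨ee, hsing, heefirst⟩ := hrootT (mk v) hv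
    rw [hsing] at hee'mem
    apply hvρ
    calc v = D.first e := he.2.symm
    _ = D.first ee.1 := by rw [heeq, Set.mem_singleton_iff.mp hee'mem]
    _ = ρf v := heefirst
  -- counting the contracted edges out of v
  have hEO_root : ∀ v, v = ρf v → EOset v = ∅ := by
    intro v hv
    rw [Set.eq_empty_iff_forall_notMem]
    rintro e ⟨-, -, hnre⟩
    exact hnre (hv ▸ Relation.ReflTransGen.refl)
  have hEO_one : ∀ v, v ≠ ρf v → ∃ f, EOset v = {f} := by
    intro v hv
    obtain ⟨f₀, hf₀E, hf₀end, hf₀not⟩ :=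
      Multidigraph.sep_exists (Nat.card E') E' rfl hcf v (ρf v) (hρreach v) hv
    refine ⟨f₀, Set.eq_singleton_iff_unique_mem.mpr ⟨⟨hf₀E, hf₀end, hf₀not⟩, ?_⟩⟩
    rintro g ⟨hgE, hgend, hgnot⟩
    by_contra hne
    exact Multidigraph.sep_unique hcf hgE hf₀E hne hgend hf₀end (hρreach v) hgnot hf₀not
  -- degrees
  have hdegcard : ∀ v, (OutSet v).ncard = if v = r then 0 else 1 := by
    intro v
    rw [hsplit v, Set.ncard_union_eq (hdisj v) (Set.toFinite _) (Set.toFinite _)]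
    by_cases hvr : v = r
    · subst hvr
      rw [if_pos rfl, hTO_r v rfl, hEO_root v hrootr.symm, Set.ncard_empty]
    · rw [if_neg hvr]
      by_cases hvq : mk v = mk r
      · have hρvr : ρf v = r := by
          show root (mk v) = r
          rw [hvq, hrootr]
        have hvρ : v ≠ ρf v := fun h => hvr (h.trans hρvr)
        obtain ⟨f, hf⟩ := hEO_one v hvρ
        rw [hTO_r v hvq, hf, Set.ncard_empty, Set.ncard_singleton]
      · by_cases hvρ : v = ρf v
        · obtain ⟨f, hf⟩ := hTO_one v hvq hvρ
          rw [hf, hEO_root v hvρ, Set.ncard_empty, Set.ncard_singleton]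
        · obtain ⟨f, hf⟩ := hEO_one v hvρ
          rw [hTO_empty v hvq hvρ, hf, Set.ncard_empty, Set.ncard_singleton]
  -- connectivity of the union
  have hlift : ∀ (q q' : CE.V), CE.Reach T q q' →
      ∀ a b : D.V, mk a = q → mk b = q' → D.Reach (T' ∪ E') a b := by
    intro q q' h
    induction h with
    | refl =>
      intro a b ha hb
      exact Multidigraph.reach_mono Set.subset_union_right ((heqv a b).mp (ha.trans hb.symm))
    | @tail c q' hqc hadj ih =>
      intro a b ha hb
      obtain ⟨ee, heeT, hor⟩ := hadj
      have hT'mem : ee.1 ∈ T' ∪ E' := Or.inl ⟨ee, heeT, rfl⟩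
      rcases hor with ⟨h1, h2⟩ | ⟨h1, h2⟩
      · have ih1 := ih a (D.first ee.1) ha h1
        have hstep : D.Reach (T' ∪ E') (D.first ee.1) (D.last ee.1) :=
          Relation.ReflTransGen.single ⟨ee.1, hT'mem, Or.inl ⟨rfl, rfl⟩⟩
        have hend : D.Reach (T' ∪ E') (D.last ee.1) b :=
          Multidigraph.reach_mono Set.subset_union_right
            ((heqv _ b).mp (h2.trans hb.symm))
        exact (ih1.trans hstep).trans hend
      · have ih1 := ih a (D.last ee.1) ha h2
        have hstep : D.Reach (T' ∪ E') (D.last ee.1) (D.first ee.1) :=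
          Relation.ReflTransGen.single ⟨ee.1, hT'mem, Or.inr ⟨rfl, rfl⟩⟩
        have hend : D.Reach (T' ∪ E') (D.first ee.1) b :=
          Multidigraph.reach_mono Set.subset_union_right
            ((heqv _ b).mp (h1.trans hb.symm))
        exact (ih1.trans hstep).trans hend
  have hreachall : ∀ a b : D.V, D.Reach (T' ∪ E') a b := fun a b =>
    hlift (mk a) (mk b) (hTspan (mk a) (mk b)) a b rfl rfl
  -- cardinality of the union via fiberwise counting
  have hcardU : Nat.card ↥(T' ∪ E') = Nat.card D.V - 1 := by
    have h1 : Nat.card ↥(T' ∪ E') = (Set.toFinset (T' ∪ E')).card := by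
      rw [Nat.card_coe_set_eq, Set.ncard_eq_toFinset_card']
    have h2 := Finset.card_eq_sum_card_fiberwise
      (f := fun e => if e ∈ S then D.last e else D.first e)
      (s := Set.toFinset (T' ∪ E')) (t := Finset.univ) (fun e _ => Finset.mem_univ _)
    have h3 : ∀ v : D.V, ((Set.toFinset (T' ∪ E')).filter
        (fun e => (if e ∈ S then D.last e else D.first e) = v)).card = (OutSet v).ncard := by
      intro v
      rw [← Set.ncard_coe_finset]
      congr 1
      ext e
      simp only [Finset.coe_filter, Set.mem_toFinset, Set.mem_setOf_eq]
      constructor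
      · rintro ⟨heU, hv⟩
        by_cases heS : e ∈ S
        · rw [if_pos heS] at hv; exact Or.inr ⟨heS, hv⟩
        · rw [if_neg heS] at hv; exact Or.inl ⟨⟨heU, heS⟩, hv⟩
      · rintro (⟨⟨heU, heS⟩, hv⟩ | ⟨heS, hv⟩)
        · exact ⟨heU, by rw [if_neg heS]; exact hv⟩
        · exact ⟨hSsubU heS, by rw [if_pos heS]; exact hv⟩
    have h4 : ∑ v : D.V, ((Set.toFinset (T' ∪ E')).filter
        (fun e => (if e ∈ S then D.last e else D.first e) = v)).card
        = ∑ v : D.V, ite (v = r) 0 1 :=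
      Finset.sum_congr rfl (fun v _ => by rw [h3 v, hdegcard v])
    have h5 : ∑ v : D.V, ite (v = r) 0 1 = Fintype.card D.V - 1 := by
      rw [← Finset.add_sum_erase Finset.univ _ (Finset.mem_univ r), if_pos rfl, zero_add]
      rw [Finset.sum_congr rfl (fun v hv => if_neg (Finset.ne_of_mem_erase hv))]
      rw [Finset.sum_const, smul_eq_mul, mul_one, Finset.card_erase_of_mem (Finset.mem_univ r),
        Finset.card_univ]
    rw [h1, h2, h4, h5, Nat.card_eq_fintype_card]
  -- assemble the result
  refine ⟨Nat.card ↥S, ?_, S, rfl, ⟨hreachall, hcardU⟩, hSsubU, ?_, ?_⟩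
  · rw [Nat.card_coe_set_eq, ← hcard, Nat.card_coe_set_eq]
    exact Set.ncard_le_ncard hSsub (Set.toFinite _)
  · intro v hv
    rw [houtdeg v, hdegcard v, if_neg hv]
  · rw [houtdeg r, hdegcard r, if_pos rfl]
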